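/- If b, c > 0, q > 1, t₀ > 0, and the initial values satisfy x₀ > 0, y₀ > 0, z₀ ≥ 0, then the solutions of the quantum SIR recurrence remain positive for all times: xₙ > 0, yₙ > 0 and zₙ ≥ 0 for every n ≥ 0. -/
import Mathlib


open Finset Filter Topology

theorem quantum_sir_positivity
(b c q t₀ : ℝ) (x y z : ℕ → ℝ)
    (hb : 0 < b) (hc : 0 < c) (hq : 1 < q) (ht : 0 < t₀)
    (hx0 : 0 < x 0) (hy0 : 0 < y 0) (hz0 : 0 ≤ z 0)
    (hrecx : ∀ n : ℕ, x (n + 1) =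
      x n * (x n + y n) / (x n + y n * (1 + b * (q - 1) * (q ^ n * t₀))))
    (hrecy : ∀ n : ℕ, y (n + 1) =
      y n * (1 + b * (q - 1) * (q ^ n * t₀)) * (x n + y n) /
        ((1 + c * (q - 1) * (q ^ n * t₀)) *
          (x n + y n * (1 + b * (q - 1) * (q ^ n * t₀)))))
    (hrecz : ∀ n : ℕ, z (n + 1) =
      c * (q - 1) * (q ^ n * t₀) *
        (y n * (1 + b * (q - 1) * (q ^ n * t₀)) * (x n + y n)) /
        ((1 + c * (q - 1) * (q ^ n * t₀)) *
          (x n + y n * (1 + b * (q - 1) * (q ^ n * t₀)))) + z n) :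
    ∀ n : ℕ, 0 < x n ∧ 0 < y n ∧ 0 ≤ z n := by
  intro n
  induction n with
  | zero => exact ⟨hx0, hy0, hz0⟩
  | succ n ih =>
    obtain ⟨hx, hy, hz⟩ := ih
    have hqn : 0 < q ^ n * t₀ := mul_pos (pow_pos (lt_trans one_pos hq) n) ht
    have hq1 : 0 < q - 1 := sub_pos.mpr hq
    have hbp : 0 < b * (q - 1) * (q ^ n * t₀) := mul_pos (mul_pos hb hq1) hqn
    have hcp : 0 < c * (q - 1) * (q ^ n * t₀) := mul_pos (mul_pos hc hq1) hqn
    have hbt : 0 < 1 + b * (q - 1) * (q ^ n * t₀) := by linarith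
    have hct : 0 < 1 + c * (q - 1) * (q ^ n * t₀) := by linarith
    have hden : 0 < x n + y n * (1 + b * (q - 1) * (q ^ n * t₀)) :=
      add_pos hx (mul_pos hy hbt)
    have hxy : 0 < x n + y n := add_pos hx hy
    refine ⟨?_, ?_, ?_⟩
    · rw [hrecx n]; exact div_pos (mul_pos hx hxy) hden
    · rw [hrecy n]
      exact div_pos (mul_pos (mul_pos hy hbt) hxy) (mul_pos hct hden)
    · rw [hrecz n]
      exact add_nonneg (le_of_lt (div_pos (mul_pos hcp
        (mul_pos (mul_pos hy hbt) hxy)) (mul_pos hct hden))) hz
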